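/- Assume the CFL condition λ L_V ≤ 1. Then the periodic explicit Euler FtL scheme is total-variation diminishing: for every n ≥ 0, Σ_{i=1}^{N−1} |y_{i+1}^{n+1} − y_i^{n+1}| ≤ Σ_{i=1}^{N−1} |y_{i+1}^n − y_i^n|, where indices are taken cyclically (y_N^n := y_1^n). -/

import Mathlib

/-- `y n i`, `i = 1, …, N-1`, is generated by the periodic explicit Euler
Follow-the-Leader scheme `y_i^{n+1} = y_i^n + λ(V(y_{i+1}^n) − V(y_i^n))`,
with the periodic convention `y_N^n := y_1^n`. -/
def IsEulerFtL (N : ℕ) (lam : ℝ) (V : ℝ → ℝ) (y : ℕ → ℕ → ℝ) : Prop :=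
  (∀ n : ℕ, y n N = y n 1) ∧
  ∀ n : ℕ, ∀ i ∈ Finset.Icc 1 (N - 1),
    y (n + 1) i = y n i + lam * (V (y n (i + 1)) - V (y n i))

/-- Under the CFL condition, the periodic explicit Euler FtL scheme is
total-variation diminishing (indices cyclic, `y_N^n := y_1^n`). -/
theorem eulerFtL_tvd
    (N : ℕ) (hN : 2 ≤ N) (ℓ Δt : ℝ) (hℓ : 0 < ℓ) (hΔt : 0 < Δt)
    (V : ℝ → ℝ) (LV : NNReal) (hVlip : LipschitzWith LV V) (hVmono : Monotone V)
    (hCFL : Δt / ℓ * (LV : ℝ) ≤ 1)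
    (y : ℕ → ℕ → ℝ) (hy : IsEulerFtL N (Δt / ℓ) V y) :
    ∀ n : ℕ, ∑ i ∈ Finset.Icc 1 (N - 1), |y (n + 1) (i + 1) - y (n + 1) i| ≤
      ∑ i ∈ Finset.Icc 1 (N - 1), |y n (i + 1) - y n i| := by
  obtain ⟨hper, hrec⟩ := hy
  intro n
  have hlam0 : (0:ℝ) ≤ Δt / ℓ := div_nonneg hΔt.le hℓ.le
  set lam : ℝ := Δt / ℓ with hlamdef
  set E : ℕ → ℝ := fun i => lam * (V (y n (i+1)) - V (y n i)) with hEdef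
  set d : ℕ → ℝ := fun i => y n (i+1) - y n i with hddef
  set σ : ℕ → ℕ := fun i => if i = N - 1 then 1 else i + 1 with hσdef
  have key : ∀ i, |d i - E i| ≤ |d i| - |E i| := by
    intro i
    have hEd : |E i| ≤ |d i| := by
      have h1 : |V (y n (i+1)) - V (y n i)| ≤ (LV : ℝ) * |d i| := by
        simpa [hddef, Real.dist_eq] using hVlip.dist_le_mul (y n (i+1)) (y n i)
      calc |E i| = lam * |V (y n (i+1)) - V (y n i)| := by
            rw [hEdef]; simp [abs_mul, abs_of_nonneg hlam0]
        _ ≤ lam * ((LV : ℝ) * |d i|) := mul_le_mul_of_nonneg_left h1 hlam0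
        _ = lam * (LV : ℝ) * |d i| := by ring
        _ ≤ 1 * |d i| := mul_le_mul_of_nonneg_right hCFL (abs_nonneg _)
        _ = |d i| := one_mul _
    rcases le_or_gt 0 (d i) with hpos | hneg
    · have hyy : y n i ≤ y n (i+1) := by
        have := hpos; simp only [hddef] at this; linarith
      have hE0 : 0 ≤ E i := mul_nonneg hlam0 (sub_nonneg.2 (hVmono hyy))
      rw [abs_of_nonneg hpos, abs_of_nonneg hE0] at *
      rw [abs_of_nonneg (by linarith)]
    · have hyy : y n (i+1) ≤ y n i := by
        have := hneg; simp only [hddef] at this; linarith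
      have hE0 : E i ≤ 0 := mul_nonpos_of_nonneg_of_nonpos hlam0
        (sub_nonpos.2 (hVmono hyy))
      rw [abs_of_neg hneg, abs_of_nonpos hE0] at *
      rw [abs_of_nonpos (by linarith)]
      linarith
  have hN1 : 1 ≤ N - 1 := by omega
  have hstep : ∀ i ∈ Finset.Icc 1 (N-1),
      y (n+1) (i+1) - y (n+1) i = d i - E i + E (σ i) := by
    intro i hi
    rw [Finset.mem_Icc] at hi
    by_cases hi' : i = N - 1
    · subst hi'
      have h1 : N - 1 + 1 = N := by omega
      have e1 := hrec n 1 (Finset.mem_Icc.2 ⟨le_refl _, hN1⟩)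
      have e2 := hrec n (N-1) (Finset.mem_Icc.2 ⟨hN1, le_refl _⟩)
      have hpn : y n N = y n 1 := hper n
      simp only [hσdef, if_pos rfl, hEdef, hddef, h1]
      rw [h1] at e2
      rw [hper (n+1), e1, e2, hpn]
      ring
    · have h1 : i + 1 ≤ N - 1 := by omega
      have e1 := hrec n i (Finset.mem_Icc.2 ⟨hi.1, hi.2⟩)
      have e2 := hrec n (i+1) (Finset.mem_Icc.2 ⟨by omega, h1⟩)
      simp only [hσdef, if_neg hi', hEdef, hddef]
      rw [e1, e2]
      ring
  have hσsum : ∑ i ∈ Finset.Icc 1 (N-1), |E (σ i)| = ∑ i ∈ Finset.Icc 1 (N-1), |E i| := by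
    refine Finset.sum_nbij' σ (fun i => if i = 1 then N - 1 else i - 1) ?_ ?_ ?_ ?_ ?_
    · intro a ha; rw [Finset.mem_Icc] at ha ⊢; simp only [hσdef]
      split <;> omega
    · intro a ha; rw [Finset.mem_Icc] at ha ⊢; split <;> omega
    · intro a ha; rw [Finset.mem_Icc] at ha; simp only [hσdef]
      split <;> split <;> omega
    · intro a ha; rw [Finset.mem_Icc] at ha; simp only [hσdef]
      split <;> split <;> omega
    · intro a _; rfl
  calc ∑ i ∈ Finset.Icc 1 (N-1), |y (n+1) (i+1) - y (n+1) i|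
      = ∑ i ∈ Finset.Icc 1 (N-1), |d i - E i + E (σ i)| :=
        Finset.sum_congr rfl fun i hi => by rw [hstep i hi]
    _ ≤ ∑ i ∈ Finset.Icc 1 (N-1), (|d i| - |E i| + |E (σ i)|) :=
        Finset.sum_le_sum fun i _ =>
          (abs_add_le _ _).trans (add_le_add_left (key i) _)
    _ = (∑ i ∈ Finset.Icc 1 (N-1), (|d i| - |E i|)) + ∑ i ∈ Finset.Icc 1 (N-1), |E (σ i)| :=
        Finset.sum_add_distrib
    _ = (∑ i ∈ Finset.Icc 1 (N-1), |d i|) - (∑ i ∈ Finset.Icc 1 (N-1), |E i|)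
          + ∑ i ∈ Finset.Icc 1 (N-1), |E i| := by rw [Finset.sum_sub_distrib, hσsum]
    _ = ∑ i ∈ Finset.Icc 1 (N-1), |d i| := by ring
    _ = ∑ i ∈ Finset.Icc 1 (N-1), |y n (i+1) - y n i| := rfl
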